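/- Let I be a finite nonempty set, let v : I → ℝ and ν > 0. Let (ξ_i)_{i∈I} be independent, identically distributed real random variables with the standard Gumbel law, i.e. with cumulative distribution function x ↦ exp(−exp(−x)) (equivalently, with density x ↦ exp(−x)·exp(−exp(−x)) with respect to Lebesgue measure). Define the random utilities U_i = v_i + ν·ξ_i. Then for every i ∈ I, the probability that U_i > U_j for all j ≠ i equals exp(v_i/ν) / Σ_{j∈I} exp(v_j/ν). -/

import Mathlib

open Finset Real MeasureTheory ProbabilityTheory Set Filter
open scoped ENNReal

/-- The standard Gumbel measure on `ℝ`, with density `x ↦ e^{-x} e^{-e^{-x}}`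
with respect to Lebesgue measure (its cdf is `x ↦ exp (-exp (-x))`). -/
noncomputable def gumbelMeasure : Measure ℝ :=
  volume.withDensity fun x => ENNReal.ofReal (Real.exp (-x) * Real.exp (-Real.exp (-x)))


open scoped ENNReal


lemma hasDerivAt_expNeg (x : ℝ) : HasDerivAt (fun x : ℝ => Real.exp (-x)) (-Real.exp (-x)) x := by
  simpa [Function.comp_def] using (Real.hasDerivAt_exp (-x)).comp x (hasDerivAt_neg x)

lemma expNeg_image_univ : (fun x : ℝ => Real.exp (-x)) '' Set.univ = Set.Ioi 0 := by
  ext u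
  simp only [Set.image_univ, Set.mem_range, Set.mem_Ioi]
  constructor
  · rintro ⟨x, rfl⟩; exact Real.exp_pos _
  · intro hu; exact ⟨-Real.log u, by simp [Real.exp_log hu]⟩

lemma expNeg_image_Iio (a : ℝ) :
    (fun x : ℝ => Real.exp (-x)) '' Set.Iio a = Set.Ioi (Real.exp (-a)) := by
  ext u
  simp only [Set.mem_image, Set.mem_Iio, Set.mem_Ioi]
  constructor
  · rintro ⟨x, hx, rfl⟩; exact Real.exp_lt_exp.2 (by linarith)
  · intro hu
    have hu0 : 0 < u := lt_trans (Real.exp_pos _) hu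
    refine ⟨-Real.log u, ?_, by simp [Real.exp_log hu0]⟩
    have hlog : -a < Real.log u := (Real.lt_log_iff_exp_lt hu0).2 hu
    linarith

lemma lintegral_expNeg_subst (s : Set ℝ) (hs : MeasurableSet s) (g : ℝ → ℝ≥0∞) :
    ∫⁻ u in ((fun x : ℝ => Real.exp (-x)) '' s), g u
      = ∫⁻ x in s, ENNReal.ofReal (Real.exp (-x)) * g (Real.exp (-x)) := by
  have hinj : Set.InjOn (fun x : ℝ => Real.exp (-x)) s := by
    intro x _ y _ h
    have := Real.exp_eq_exp.1 h
    linarith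
  have h := MeasureTheory.lintegral_image_eq_lintegral_abs_det_fderiv_mul volume hs
    (f' := fun x => (1 : ℝ →L[ℝ] ℝ).smulRight (-Real.exp (-x)))
    (fun x _ => ((hasDerivAt_expNeg x).hasDerivWithinAt).hasFDerivWithinAt) hinj g
  simpa [ContinuousLinearMap.det_toSpanSingleton, abs_of_pos (Real.exp_pos _)] using h

lemma lintegral_exp_neg_mul_Ioi {S : ℝ} (hS : 0 < S) (r : ℝ) :
    ∫⁻ u in Set.Ioi r, ENNReal.ofReal (Real.exp (-(S * u)))
      = ENNReal.ofReal (Real.exp (-(S * r)) / S) := by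
  have hint : IntegrableOn (fun u => Real.exp (-(S * u))) (Set.Ioi r) := by
    simpa [neg_mul] using exp_neg_integrableOn_Ioi r hS
  rw [← MeasureTheory.ofReal_integral_eq_lintegral_ofReal hint
    (Filter.Eventually.of_forall fun x => (Real.exp_pos _).le)]
  congr 1
  have hderiv : ∀ u ∈ Set.Ici r, HasDerivAt (fun u => -Real.exp (-(S * u)) / S)
      (Real.exp (-(S * u))) u := by
    intro u _
    have h1 : HasDerivAt (fun u : ℝ => -(S * u)) (-S) u := by
      simpa [Pi.neg_def] using ((hasDerivAt_id u).const_mul S).neg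
    have h2 := (Real.hasDerivAt_exp (-(S * u))).comp u h1
    have h3 := (h2.neg).div_const S
    refine h3.congr_deriv ?_
    field_simp
  have htop : Tendsto (fun u => -Real.exp (-(S * u)) / S) atTop (nhds 0) := by
    have h1 : Tendsto (fun u : ℝ => -(S * u)) atTop atBot := by
      exact tendsto_neg_atTop_atBot.comp (Filter.tendsto_id.const_mul_atTop hS)
    have h2 := Real.tendsto_exp_atBot.comp h1
    have := (h2.neg).div_const S
    simpa using this
  have := MeasureTheory.integral_Ioi_of_hasDerivAt_of_tendsto' hderiv hint htop
  rw [this]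
  field_simp
  ring

lemma lintegral_gumbel_density {S : ℝ} (hS : 0 < S) :
    ∫⁻ x, ENNReal.ofReal (Real.exp (-x) * Real.exp (-(S * Real.exp (-x))))
      = ENNReal.ofReal (1 / S) := by
  have h := lintegral_expNeg_subst Set.univ MeasurableSet.univ
    (fun u => ENNReal.ofReal (Real.exp (-(S * u))))
  rw [expNeg_image_univ, Measure.restrict_univ, lintegral_exp_neg_mul_Ioi hS 0] at h
  calc ∫⁻ x, ENNReal.ofReal (Real.exp (-x) * Real.exp (-(S * Real.exp (-x))))
      = ∫⁻ x, ENNReal.ofReal (Real.exp (-x)) * ENNReal.ofReal (Real.exp (-(S * Real.exp (-x)))) := by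
        simp_rw [← ENNReal.ofReal_mul (Real.exp_pos _).le]
    _ = ENNReal.ofReal (Real.exp (-(S * 0)) / S) := by rw [← h]
    _ = ENNReal.ofReal (1 / S) := by norm_num

lemma gumbel_Iio (a : ℝ) :
    gumbelMeasure (Set.Iio a) = ENNReal.ofReal (Real.exp (-Real.exp (-a))) := by
  rw [gumbelMeasure, withDensity_apply _ measurableSet_Iio]
  have h := lintegral_expNeg_subst (Set.Iio a) measurableSet_Iio
    (fun u => ENNReal.ofReal (Real.exp (-u)))
  rw [expNeg_image_Iio] at h
  have h2 : ∫⁻ u in Set.Ioi (Real.exp (-a)), ENNReal.ofReal (Real.exp (-u))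
      = ENNReal.ofReal (Real.exp (-Real.exp (-a))) := by
    simpa using lintegral_exp_neg_mul_Ioi one_pos (Real.exp (-a))
  calc ∫⁻ x in Set.Iio a, ENNReal.ofReal (Real.exp (-x) * Real.exp (-Real.exp (-x)))
      = ∫⁻ x in Set.Iio a,
          ENNReal.ofReal (Real.exp (-x)) * ENNReal.ofReal (Real.exp (-Real.exp (-x))) := by
        simp_rw [← ENNReal.ofReal_mul (Real.exp_pos _).le]
    _ = ENNReal.ofReal (Real.exp (-Real.exp (-a))) := by rw [← h, h2]


instance : IsProbabilityMeasure gumbelMeasure := by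
  constructor
  rw [gumbelMeasure, withDensity_apply _ MeasurableSet.univ, Measure.restrict_univ]
  have := lintegral_gumbel_density one_pos
  simp only [one_mul] at this
  rw [this]
  norm_num


/-- Probabilistic foundation of the Logit model: if the random utilities are
`U i = v i + ν ξ i` with `(ξ i)` i.i.d. standard Gumbel, then the probability
that alternative `i` has the strictly highest utility is the softmax
`exp (v i / ν) / ∑ j, exp (v j / ν)`. -/
theorem gumbel_max_gives_logit
    (I : Type*) [Fintype I] [Nonempty I] [DecidableEq I]
    (v : I → ℝ) (ν : ℝ) (hν : 0 < ν)
    (Ω : Type*) [MeasurableSpace Ω] (P : Measure Ω) [IsProbabilityMeasure P]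
    (ξ : I → Ω → ℝ) (hmeas : ∀ i, Measurable (ξ i))
    (hindep : iIndepFun ξ P)
    (hlaw : ∀ i, P.map (ξ i) = gumbelMeasure)
    (U : I → Ω → ℝ) (hU : ∀ i ω, U i ω = v i + ν * ξ i ω) (i : I) :
    P {ω | ∀ j : I, j ≠ i → U j ω < U i ω}
      = ENNReal.ofReal (Real.exp (v i / ν) / ∑ j, Real.exp (v j / ν)) := by
  classical
  let T := {j : I // j ≠ i}
  let c : T → ℝ := fun j => (v i - v (j : I)) / ν
  let Y : Ω → (T → ℝ) := fun ω j => ξ (j : I) ω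
  have hYmeas : Measurable Y := measurable_pi_lambda _ fun j => hmeas _
  have hνc : ∀ j : T, ν * c j = v i - v (j : I) := by
    intro j; simp only [c]; field_simp
  -- law of the tuple Y
  have hYlaw : P.map Y = Measure.pi (fun _ : T => gumbelMeasure) := by
    refine (Measure.pi_eq ?_).symm
    intro s hs
    set s' : I → Set ℝ := fun j => if h : j = i then Set.univ else s ⟨j, h⟩ with hs'def
    have hs' : ∀ j, MeasurableSet (s' j) := by
      intro j; by_cases h : j = i <;> simp [s', h, hs]
    have hpre : Y ⁻¹' (Set.pi Set.univ s) = ⋂ j ∈ Finset.univ.erase i, ξ j ⁻¹' s' j := by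
      ext ω
      simp only [Set.mem_preimage, Set.mem_pi, Set.mem_univ, forall_true_left, Set.mem_iInter,
        Finset.mem_erase, Finset.mem_univ, and_true]
      constructor
      · intro h j hj
        have := h ⟨j, hj⟩
        simpa [Y, s', dif_neg hj] using this
      · intro h j
        have := h (j : I) j.2
        simpa [Y, s', dif_neg j.2] using this
    rw [Measure.map_apply hYmeas (MeasurableSet.univ_pi hs), hpre,
      hindep.measure_inter_preimage_eq_mul _ (fun j _ => hs' j)]
    have heq : ∀ j ∈ Finset.univ.erase i, P (ξ j ⁻¹' s' j) = gumbelMeasure (s' j) := by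
      intro j _
      rw [← hlaw j, Measure.map_apply (hmeas j) (hs' j)]
    rw [Finset.prod_congr rfl heq,
      Finset.prod_subtype (p := fun j => j ≠ i) (Finset.univ.erase i) (fun x => by simp) (fun j => gumbelMeasure (s' j))]
    refine Finset.prod_congr rfl fun j _ => ?_
    simp [s', dif_neg j.2]
  -- independence of ξ i and Y
  have hXY : IndepFun (ξ i) Y P := by
    have h := hindep.indepFun_finset {i} (Finset.univ.erase i) (by simp) hmeas
    exact h.comp (_mγ := inferInstance) (_mγ' := inferInstance) (φ := fun f => f ⟨i, Finset.mem_singleton_self i⟩)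
      (ψ := fun f (j : T) => f ⟨(j : I), by simp [j.2]⟩)
      (measurable_pi_apply _) (measurable_pi_lambda _ fun j => measurable_pi_apply _)
  set E : Set (ℝ × (T → ℝ)) := {p | ∀ j : T, p.2 j < p.1 + c j} with hEdef
  have hset : {ω | ∀ j : I, j ≠ i → U j ω < U i ω} = (fun ω => (ξ i ω, Y ω)) ⁻¹' E := by
    ext ω
    simp only [Set.mem_setOf_eq, Set.mem_preimage, hEdef]
    constructor
    · intro h j
      have h1 := h (j : I) j.2
      rw [hU, hU] at h1
      have h2 : ν * ξ (j : I) ω < ν * (ξ i ω + c j) := by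
        rw [mul_add, hνc]; linarith
      exact (mul_lt_mul_iff_right₀ hν).1 h2
    · intro h j hj
      have h1 := (mul_lt_mul_iff_right₀ hν).2 (h ⟨j, hj⟩)
      rw [mul_add, hνc ⟨j, hj⟩] at h1
      rw [hU, hU]; dsimp only [Y] at h1; linarith
  have hEmeas : MeasurableSet E := by
    rw [hEdef, Set.setOf_forall]
    exact MeasurableSet.iInter fun j => measurableSet_lt
      (measurable_snd.eval) (measurable_fst.add_const _)
  rw [hset, ← Measure.map_apply ((hmeas i).prodMk hYmeas) hEmeas,
    (indepFun_iff_map_prod_eq_prod_map_map (hmeas i).aemeasurable hYmeas.aemeasurable).1 hXY,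
    hlaw i, hYlaw, Measure.prod_apply hEmeas]
  have hslice : ∀ x : ℝ, (Measure.pi fun _ : T => gumbelMeasure) (Prod.mk x ⁻¹' E)
      = ENNReal.ofReal (∏ j : T, Real.exp (-Real.exp (-(x + c j)))) := by
    intro x
    have hpre : Prod.mk x ⁻¹' E = Set.pi Set.univ (fun j : T => Set.Iio (x + c j)) := by
      ext y; simp [hEdef, Set.mem_pi]
    rw [hpre, Measure.pi_pi]
    simp_rw [gumbel_Iio]
    rw [ENNReal.ofReal_prod_of_nonneg (fun j _ => (Real.exp_pos _).le)]
  simp_rw [hslice]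
  set S : ℝ := ∑ j, Real.exp ((v j - v i) / ν) with hSdef
  have hS : 0 < S := Finset.sum_pos (fun j _ => Real.exp_pos _) ⟨i, Finset.mem_univ i⟩
  have hcneg : ∀ j : T, -(c j) = (v (j : I) - v i) / ν := by
    intro j; show -((v i - v (j : I)) / ν) = _; rw [← neg_div, neg_sub]
  have hSsum : 1 + ∑ j : T, Real.exp (-(c j)) = S := by
    simp_rw [hcneg]
    rw [hSdef, ← Finset.add_sum_erase _ _ (Finset.mem_univ i)]
    congr 1
    · simp
    · exact (Finset.sum_subtype (p := fun j => j ≠ i) (Finset.univ.erase i) (fun x => by simp [Finset.mem_erase]) (fun j => Real.exp ((v j - v i) / ν))).symm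
  have hpt : ∀ x : ℝ,
      ENNReal.ofReal (Real.exp (-x) * Real.exp (-Real.exp (-x)))
        * ENNReal.ofReal (∏ j : T, Real.exp (-Real.exp (-(x + c j))))
      = ENNReal.ofReal (Real.exp (-x) * Real.exp (-(S * Real.exp (-x)))) := by
    intro x
    rw [← ENNReal.ofReal_mul (by positivity)]
    congr 1
    rw [← Real.exp_sum, mul_assoc, ← Real.exp_add]
    congr 2
    have hj : ∀ j : T, Real.exp (-(x + c j)) = Real.exp (-x) * Real.exp (-(c j)) := by
      intro j; rw [← Real.exp_add]; ring_nf
    simp_rw [hj]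
    have h1 : (∑ j : T, -(Real.exp (-x) * Real.exp (-(c j))))
        = -(Real.exp (-x) * ∑ j : T, Real.exp (-(c j))) := by
      rw [Finset.mul_sum, ← Finset.sum_neg_distrib]
    rw [h1]
    linear_combination (-Real.exp (-x)) * hSsum
  have hdens : Measurable fun x : ℝ =>
      ENNReal.ofReal (Real.exp (-x) * Real.exp (-Real.exp (-x))) := by fun_prop
  have hg : Measurable fun x : ℝ =>
      ENNReal.ofReal (∏ j : T, Real.exp (-Real.exp (-(x + c j)))) := by
    apply Measurable.ennreal_ofReal
    exact Finset.measurable_prod _ fun j _ => by fun_prop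
  rw [gumbelMeasure, lintegral_withDensity_eq_lintegral_mul _ hdens hg]
  simp only [Pi.mul_apply]
  simp_rw [hpt]
  rw [lintegral_gumbel_density hS]
  congr 1
  rw [hSdef]
  have hterm : ∀ j : I, Real.exp ((v j - v i) / ν)
      = Real.exp (v j / ν) / Real.exp (v i / ν) := by
    intro j; rw [sub_div, Real.exp_sub]
  simp_rw [hterm]
  rw [← Finset.sum_div, one_div_div]
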